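/- Let k ≥ 4 be an even integer. The number of unordered solutions {α + β ≡ γ + δ} to the Sidon equation in ℤ_k with α, β, γ, δ distinct is exactly k³/8 - k²/2 + k/2. -/

import Mathlib

set_option maxHeartbeats 1000000
set_option linter.unusedSectionVars false

section SidonAux
variable {k : ℕ} [NeZero k]

open Finset

def P4 (a b c d : ZMod k) : Prop :=
  a ≠ b ∧ a ≠ c ∧ a ≠ d ∧ b ≠ c ∧ b ≠ d ∧ c ≠ d ∧ a + b = c + d

instance (a b c d : ZMod k) : Decidable (P4 a b c d) := by unfold P4; infer_instance

def DD (k : ℕ) [NeZero k] : Finset (ZMod k × ZMod k × ZMod k × ZMod k) :=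
  univ.filter fun x => P4 x.1 x.2.1 x.2.2.1 x.2.2.2

def ff (x : ZMod k × ZMod k × ZMod k × ZMod k) : Sym2 (Sym2 (ZMod k)) :=
  s(s(x.1, x.2.1), s(x.2.2.1, x.2.2.2))

lemma fiber_card (a b c d : ZMod k) (h : P4 a b c d) :
    ((DD k).filter fun x => ff x = s(s(a, b), s(c, d))).card = 8 := by
  obtain ⟨h1, h2, h3, h4, h5, h6, h7⟩ := h
  have h1' := h1.symm; have h2' := h2.symm; have h3' := h3.symm
  have h4' := h4.symm; have h5' := h5.symm; have h6' := h6.symm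
  have hset : ((DD k).filter fun x => ff x = s(s(a, b), s(c, d))) =
      {(a,b,c,d), (b,a,c,d), (a,b,d,c), (b,a,d,c),
       (c,d,a,b), (d,c,a,b), (c,d,b,a), (d,c,b,a)} := by
    ext ⟨x, y, z, w⟩
    simp only [DD, ff, Finset.mem_filter, Finset.mem_univ, true_and, Sym2.eq_iff,
      Finset.mem_insert, Finset.mem_singleton, Prod.mk.injEq]
    simp only [P4]
    constructor
    · rintro ⟨-, (⟨⟨rfl,rfl⟩|⟨rfl,rfl⟩, ⟨rfl,rfl⟩|⟨rfl,rfl⟩⟩|⟨⟨rfl,rfl⟩|⟨rfl,rfl⟩, ⟨rfl,rfl⟩|⟨rfl,rfl⟩⟩)⟩ <;> simp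
    · rintro (⟨rfl,rfl,rfl,rfl⟩|⟨rfl,rfl,rfl,rfl⟩|⟨rfl,rfl,rfl,rfl⟩|⟨rfl,rfl,rfl,rfl⟩|⟨rfl,rfl,rfl,rfl⟩|⟨rfl,rfl,rfl,rfl⟩|⟨rfl,rfl,rfl,rfl⟩|⟨rfl,rfl,rfl,rfl⟩) <;>
        refine ⟨⟨?_, ?_, ?_, ?_, ?_, ?_, ?_⟩, by simp⟩ <;>
        first
          | assumption
          | linear_combination h7
          | linear_combination -h7
  rw [hset]
  rw [card_insert_of_notMem (by simp [Prod.ext_iff]; tauto),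
      card_insert_of_notMem (by simp [Prod.ext_iff]; tauto),
      card_insert_of_notMem (by simp [Prod.ext_iff]; tauto),
      card_insert_of_notMem (by simp [Prod.ext_iff]; tauto),
      card_insert_of_notMem (by simp [Prod.ext_iff]; tauto),
      card_insert_of_notMem (by simp [Prod.ext_iff]; tauto),
      card_insert_of_notMem (by simp [Prod.ext_iff]; tauto),
      card_singleton]

def D0 (k : ℕ) [NeZero k] : Finset (ZMod k × ZMod k) :=
  univ.filter fun p => p.1 ≠ 0 ∧ p.2 ≠ 0 ∧ p.1 ≠ p.2 ∧ p.1 + p.2 ≠ 0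

lemma two_eq_zero_iff (hk : 4 ≤ k) (hke : Even k) (c : ZMod k) :
    2 * c = 0 ↔ c = 0 ∨ c = ((k / 2 : ℕ) : ZMod k) := by
  constructor
  · intro h
    have hv : ((2 * c.val : ℕ) : ZMod k) = 0 := by
      push_cast [ZMod.natCast_zmod_val]; exact h
    rw [ZMod.natCast_eq_zero_iff] at hv
    have hlt : c.val < k := ZMod.val_lt c
    obtain ⟨m, hm⟩ := hv
    obtain ⟨t, ht⟩ := hke
    have h2v : 2 * c.val = 0 ∨ 2 * c.val = k := by
      rcases Nat.lt_or_ge m 2 with hm2 | hm2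
      · interval_cases m <;> omega
      · exfalso
        have := Nat.mul_le_mul_left k hm2
        omega
    have : c.val = 0 ∨ c.val = k / 2 := by omega
    rcases this with h' | h'
    · left
      have := ZMod.natCast_zmod_val c
      rw [h'] at this; simpa using this.symm
    · right
      have := ZMod.natCast_zmod_val c
      rw [h'] at this; exact this.symm
  · rintro (rfl | rfl)
    · ring
    · have : ((2 * (k / 2) : ℕ) : ZMod k) = 0 := by
        rw [ZMod.natCast_eq_zero_iff]
        have h2 : 2 * (k / 2) = k := by obtain ⟨t, rfl⟩ := hke; omega
        rw [h2]
      push_cast at this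
      linear_combination this

lemma half_ne_zero (hk : 4 ≤ k) : ((k / 2 : ℕ) : ZMod k) ≠ 0 := by
  rw [Ne, ZMod.natCast_eq_zero_iff]
  intro h
  have := Nat.le_of_dvd (by omega) h
  omega

lemma D0_fiber_zero : (D0 k).filter (fun p => p.1 = 0) = ∅ := by
  ext ⟨x, y⟩
  simp only [D0, mem_filter, mem_univ, true_and, notMem_empty, iff_false, not_and]
  tauto

lemma D0_fiber (c : ZMod k) (hc : c ≠ 0) :
    (D0 k).filter (fun p => p.1 = c) = (univ \ {0, c, -c}).image fun y => (c, y) := by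
  ext ⟨x, y⟩
  simp only [D0, mem_filter, mem_univ, true_and, mem_image, mem_sdiff, mem_insert,
    mem_singleton, Prod.mk.injEq, not_or]
  constructor
  · rintro ⟨⟨h1, h2, h3, h4⟩, rfl⟩
    exact ⟨y, ⟨h2, fun h => h3 h.symm, fun h => h4 (by rw [h]; ring)⟩, rfl, rfl⟩
  · rintro ⟨y', ⟨hy1, hy2, hy3⟩, rfl, rfl⟩
    exact ⟨⟨hc, hy1, fun h => hy2 h.symm, fun h => hy3 (by linear_combination h)⟩, rfl⟩

lemma D0_card (hk : 4 ≤ k) (hke : Even k) : (D0 k).card = (k - 2) ^ 2 := by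
  classical
  set m : ZMod k := ((k / 2 : ℕ) : ZMod k) with hm
  have hm0 : m ≠ 0 := half_ne_zero hk
  have hmm : -m = m := by
    have : 2 * m = 0 := (two_eq_zero_iff hk hke m).2 (Or.inr rfl)
    linear_combination -this
  have hcard : (D0 k).card = ∑ c : ZMod k, ((D0 k).filter fun p => p.1 = c).card :=
    card_eq_sum_card_fiberwise (fun x _ => mem_univ _)
  have hcardZ : Fintype.card (ZMod k) = k := ZMod.card k
  have hg0 : ((D0 k).filter fun p => p.1 = (0 : ZMod k)).card = 0 := by
    rw [D0_fiber_zero]; simp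
  have hgm : ((D0 k).filter fun p => p.1 = m).card = k - 2 := by
    rw [D0_fiber m hm0, card_image_of_injective _ (by intro a b h; simpa using h)]
    rw [card_sdiff_of_subset (subset_univ _), card_univ, hcardZ]
    have hset : ({0, m, -m} : Finset (ZMod k)) = {0, m} := by
      ext x; simp [hmm]
    rw [hset, card_insert_of_notMem (by simpa using hm0.symm), card_singleton]
  have hgother : ∀ c : ZMod k, c ≠ 0 → c ≠ m →
      ((D0 k).filter fun p => p.1 = c).card = k - 3 := by
    intro c hc hcm
    rw [D0_fiber c hc, card_image_of_injective _ (by intro a b h; simpa using h)]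
    rw [card_sdiff_of_subset (subset_univ _), card_univ, hcardZ]
    have h2c : 2 * c ≠ 0 := fun h => by
      rcases (two_eq_zero_iff hk hke c).1 h with rfl | rfl
      exacts [hc rfl, hcm rfl]
    have hcc : c ≠ -c := fun h => h2c (by linear_combination h)
    have hn0 : (0 : ZMod k) ∉ ({c, -c} : Finset (ZMod k)) := by
      simp only [mem_insert, mem_singleton, not_or]
      exact ⟨hc.symm, fun h => hc (by linear_combination h)⟩
    have hnc : c ∉ ({-c} : Finset (ZMod k)) := by simpa using hcc
    rw [card_insert_of_notMem hn0, card_insert_of_notMem hnc, card_singleton]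
  rw [hcard, ← Finset.add_sum_erase _ _ (mem_univ (0 : ZMod k)), hg0, zero_add,
      ← Finset.add_sum_erase _ _ (mem_erase.2 ⟨hm0, mem_univ m⟩), hgm]
  have hcard2 : ((univ.erase (0 : ZMod k)).erase m).card = k - 2 := by
    rw [card_erase_of_mem (mem_erase.2 ⟨hm0, mem_univ m⟩), card_erase_of_mem (mem_univ _),
        card_univ, hcardZ]
    omega
  have hrest : ∑ c ∈ (univ.erase (0 : ZMod k)).erase m,
      ((D0 k).filter fun p => p.1 = c).card = (k - 2) * (k - 3) := by
    rw [Finset.sum_const_nat (fun c hcmem => by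
      rw [mem_erase, mem_erase] at hcmem
      exact hgother c hcmem.2.1 hcmem.1), hcard2]
  rw [hrest]
  obtain ⟨t, rfl⟩ : ∃ t, k = t + 4 := ⟨k - 4, by omega⟩
  have e1 : t + 4 - 2 = t + 2 := by omega
  have e2 : t + 4 - 3 = t + 1 := by omega
  rw [e1, e2]; ring

lemma DD_card_eq : (DD k).card = k * (D0 k).card := by
  classical
  have hbij : (DD k).card = ((univ : Finset (ZMod k)) ×ˢ D0 k).card := by
    apply card_nbij' (i := fun x => (x.1, (x.2.2.1 - x.1, x.2.2.2 - x.1)))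
      (j := fun y => (y.1, y.2.1 + y.2.2 + y.1, y.2.1 + y.1, y.2.2 + y.1))
    · rintro ⟨a, b, c, d⟩ hx
      simp only [DD, Finset.mem_coe, mem_filter, mem_univ, true_and] at hx
      simp only [P4] at hx
      obtain ⟨h1, h2, h3, h4, h5, h6, h7⟩ := hx
      simp only [Finset.mem_coe, mem_product, mem_univ, true_and, D0, mem_filter]
      exact ⟨sub_ne_zero.2 h2.symm, sub_ne_zero.2 h3.symm,
        fun h => h6 (by linear_combination h), fun h => h1 (by linear_combination -h - h7)⟩
    · rintro ⟨a, x, y⟩ hy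
      simp only [Finset.mem_coe, mem_product, mem_univ, true_and, D0, mem_filter] at hy
      obtain ⟨hx, hy', hxy, hxy0⟩ := hy
      simp only [Finset.mem_coe, DD, mem_filter, mem_univ, true_and]
      simp only [P4]
      refine ⟨fun h => hxy0 (by linear_combination -h),
        fun h => hx (by linear_combination -h),
        fun h => hy' (by linear_combination -h),
        fun h => hy' (by linear_combination h),
        fun h => hx (by linear_combination h),
        fun h => hxy (by linear_combination h),
        by ring⟩
    · rintro ⟨a, b, c, d⟩ hx
      simp only [DD, Finset.mem_coe, mem_filter, mem_univ, true_and] at hx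
      simp only [P4] at hx
      have e1 : c - a + (d - a) + a = b := by linear_combination -hx.2.2.2.2.2.2
      have e2 : c - a + a = c := by ring
      have e3 : d - a + a = d := by ring
      simp only [e1, e2, e3]
    · rintro ⟨a, x, y⟩ -
      have e2 : x + a - a = x := by ring
      have e3 : y + a - a = y := by ring
      simp only [e2, e3]
  rw [hbij, card_product, card_univ, ZMod.card]

end SidonAux

theorem stmt_12 (k : ℕ) (hk : 4 ≤ k) (hke : Even k) :
    (({q : Sym2 (Sym2 (ZMod k)) | ∃ a b c d : ZMod k,
        q = s(s(a, b), s(c, d)) ∧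
        a ≠ b ∧ a ≠ c ∧ a ≠ d ∧ b ≠ c ∧ b ≠ d ∧ c ≠ d ∧
        a + b = c + d}.ncard : ℚ)) =
      (k : ℚ) ^ 3 / 8 - (k : ℚ) ^ 2 / 2 + (k : ℚ) / 2 := by
  classical
  haveI : NeZero k := ⟨by omega⟩
  set S : Set (Sym2 (Sym2 (ZMod k))) := {q | ∃ a b c d : ZMod k,
        q = s(s(a, b), s(c, d)) ∧
        a ≠ b ∧ a ≠ c ∧ a ≠ d ∧ b ≠ c ∧ b ≠ d ∧ c ≠ d ∧
        a + b = c + d} with hS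
  have hfin : S.Finite := Set.toFinite _
  rw [Set.ncard_eq_toFinset_card _ hfin]
  set T : Finset (Sym2 (Sym2 (ZMod k))) := hfin.toFinset with hT
  have key : (DD k).card = T.card * 8 := by
    rw [Finset.card_eq_sum_card_fiberwise (f := ff) (t := T)
      (fun x hx => by
        rw [Finset.mem_coe, hT, Set.Finite.mem_toFinset, hS]
        simp only [DD, Finset.mem_coe, Finset.mem_filter, Finset.mem_univ, true_and] at hx
        simp only [P4] at hx
        exact ⟨x.1, x.2.1, x.2.2.1, x.2.2.2, rfl, hx.1, hx.2.1, hx.2.2.1, hx.2.2.2.1,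
          hx.2.2.2.2.1, hx.2.2.2.2.2.1, hx.2.2.2.2.2.2⟩)]
    apply Finset.sum_const_nat
    intro q hq
    rw [hT, Set.Finite.mem_toFinset, hS] at hq
    obtain ⟨a, b, c, d, rfl, h1, h2, h3, h4, h5, h6, h7⟩ := hq
    exact fiber_card a b c d ⟨h1, h2, h3, h4, h5, h6, h7⟩
  have hDD : (DD k).card = k * (k - 2) ^ 2 := by
    rw [DD_card_eq, D0_card hk hke]
  have h8 : (T.card : ℚ) * 8 = (k : ℚ) * ((k : ℚ) - 2) ^ 2 := by
    have := key.symm.trans hDD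
    have hcast : ((T.card * 8 : ℕ) : ℚ) = ((k * (k - 2) ^ 2 : ℕ) : ℚ) := by
      exact_mod_cast congrArg (Nat.cast : ℕ → ℚ) this
    push_cast [Nat.cast_sub (show 2 ≤ k by omega)] at hcast
    exact hcast
  linear_combination h8 / 8
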